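/- Let c : ℝ → ℝ^{3×3} be a curve of 3×3 real matrices, let t ∈ ℝ, and suppose c has derivative D ∈ ℝ^{3×3} at t (in the sense of HasDerivAt) and that 1 + tr[c(t)] > 0. Then the curve s ↦ e_R(c(s)) := (1/√(1 + tr[c(s)]))·(c(s) − c(s)ᵀ)∨ has derivative at t equal to (1/√(1 + tr[c(t)]))·(D − Dᵀ)∨ − (tr[D]/(2(1 + tr[c(t)])))·e_R(c(t)). -/

import Mathlib

open Matrix

noncomputable section

/-- The cross (hat) map: `x^×` with `x^× y = x × y`. -/
def cross3 (x : Fin 3 → ℝ) : Matrix (Fin 3) (Fin 3) ℝ :=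
  !![0, -x 2, x 1; x 2, 0, -x 0; -x 1, x 0, 0]

/-- The vee map: `A∨ = (A₃₂, A₁₃, A₂₁)`. -/
def vee3 (A : Matrix (Fin 3) (Fin 3) ℝ) : Fin 3 → ℝ :=
  ![A 2 1, A 0 2, A 1 0]

/-- The Rodrigues matrix `R(α,θ) = I + sin θ · α^× + (1-cos θ) · α^×α^×`. -/
def rod (α : Fin 3 → ℝ) (θ : ℝ) : Matrix (Fin 3) (Fin 3) ℝ :=
  1 + Real.sin θ • cross3 α + (1 - Real.cos θ) • (cross3 α * cross3 α)

/-- The error vector `ψ(R) = ½(R - Rᵀ)∨`. -/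
def psi3 (R : Matrix (Fin 3) (Fin 3) ℝ) : Fin 3 → ℝ :=
  (1 / 2 : ℝ) • vee3 (R - Rᵀ)

/-- The generalized error vector `e_R(R) = (1/√(1+tr R)) (R - Rᵀ)∨`. -/
def eR (R : Matrix (Fin 3) (Fin 3) ℝ) : Fin 3 → ℝ :=
  (1 / Real.sqrt (1 + R.trace)) • vee3 (R - Rᵀ)

/-- `E_c(R) = ½((tr R)·I - Rᵀ)`. -/
def Ec (R : Matrix (Fin 3) (Fin 3) ℝ) : Matrix (Fin 3) (Fin 3) ℝ :=
  (1 / 2 : ℝ) • (R.trace • (1 : Matrix (Fin 3) (Fin 3) ℝ) - Rᵀ)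

/-- `E(R) = (1/√(1+tr R))(2E_c(R) + ½ e_R e_Rᵀ)`. -/
def Emat (R : Matrix (Fin 3) (Fin 3) ℝ) : Matrix (Fin 3) (Fin 3) ℝ :=
  (1 / Real.sqrt (1 + R.trace)) •
    ((2 : ℝ) • Ec R + (1 / 2 : ℝ) • vecMulVec (eR R) (eR R))

attribute [local instance] Matrix.normedAddCommGroup Matrix.normedSpace

/-- vee3 (A - Aᵀ) as a linear map -/
def veeSkewLM : Matrix (Fin 3) (Fin 3) ℝ →ₗ[ℝ] (Fin 3 → ℝ) where
  toFun A := vee3 (A - Aᵀ)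
  map_add' A B := by
    funext i
    fin_cases i <;> simp [vee3, Matrix.transpose_apply, Matrix.sub_apply, Matrix.add_apply] <;> ring
  map_smul' r A := by
    funext i
    fin_cases i <;> simp [vee3, Matrix.transpose_apply, Matrix.sub_apply, Matrix.smul_apply,
      smul_eq_mul] <;> ring

def veeSkewCLM : Matrix (Fin 3) (Fin 3) ℝ →L[ℝ] (Fin 3 → ℝ) :=
  LinearMap.toContinuousLinearMap veeSkewLM

def traceCLM : Matrix (Fin 3) (Fin 3) ℝ →L[ℝ] ℝ :=
  LinearMap.toContinuousLinearMap (Matrix.traceLinearMap (Fin 3) ℝ ℝ)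

/-- chain rule for the generalized error vector along a matrix curve. -/
theorem hasDerivAt_eR (c : ℝ → Matrix (Fin 3) (Fin 3) ℝ) (t : ℝ)
    (D : Matrix (Fin 3) (Fin 3) ℝ) (hc : HasDerivAt c D t)
    (htr : 1 + (c t).trace > 0) :
    HasDerivAt (fun s => eR (c s))
      ((1 / Real.sqrt (1 + (c t).trace)) • vee3 (D - Dᵀ) -
        (D.trace / (2 * (1 + (c t).trace))) • eR (c t)) t := by
  set x := 1 + (c t).trace with hx
  have hxpos : (0:ℝ) < x := htr
  have hsx : Real.sqrt x ≠ 0 := ne_of_gt (Real.sqrt_pos.mpr hxpos)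
  have hv : HasDerivAt (fun s => vee3 (c s - (c s)ᵀ)) (vee3 (D - Dᵀ)) t := by
    have := veeSkewCLM.hasFDerivAt.comp_hasDerivAt t hc
    exact this
  have htrace : HasDerivAt (fun s => (c s).trace) D.trace t := by
    have := traceCLM.hasFDerivAt.comp_hasDerivAt t hc
    exact this
  have hf : HasDerivAt (fun s => 1 + (c s).trace) D.trace t := htrace.const_add 1
  have hsqrt : HasDerivAt (fun s => Real.sqrt (1 + (c s).trace))
      (D.trace / (2 * Real.sqrt x)) t := hf.sqrt (ne_of_gt hxpos)
  have hinv : HasDerivAt (fun s => (Real.sqrt (1 + (c s).trace))⁻¹)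
      (-(D.trace / (2 * Real.sqrt x)) / (Real.sqrt x) ^ 2) t := hsqrt.inv hsx
  have hcomb := hinv.smul hv
  have heq : (fun s => (Real.sqrt (1 + (c s).trace))⁻¹ • vee3 (c s - (c s)ᵀ))
      = fun s => eR (c s) := by
    funext s; simp [eR, one_div]
  rw [show ((fun s => (Real.sqrt (1 + (c s).trace))⁻¹) • fun s => vee3 (c s - (c s)ᵀ)) = fun s => eR (c s) from heq] at hcomb
  convert hcomb using 1
  · rfl
  · rfl
  · rfl
  have hsq : Real.sqrt x ^ 2 = x := Real.sq_sqrt hxpos.le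
  rw [eR, ← hx, hsq, smul_smul, sub_eq_add_neg, ← neg_smul]
  congr 1
  · rw [one_div]
  · congr 1
    field_simp
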